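/- For all natural numbers N ≥ 1 and all natural numbers m with 0 ≤ m ≤ N − 1, one has ∑_{n=0}^{N−1} h_m(n,N) = 1, where h_m(n,N) = ((m+1)²/N) ∑_{k=0}^m [(−m)_k (n+1)_k (m+2)_k]/[(2)_k (N+1)_k k!]. -/

import Mathlib

/-- The Pochhammer symbol `(a)_k = a (a+1) ⋯ (a+k-1)` over ℚ. -/
noncomputable def poch (a : ℚ) (k : ℕ) : ℚ := (ascPochhammer ℚ k).eval a

/-- The Shmaliy polynomial `h_m(n,N)`. -/
noncomputable def shmaliy (m n N : ℕ) : ℚ :=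
  (((m : ℚ) + 1) ^ 2 / N) *
    ∑ k ∈ Finset.range (m + 1),
      (poch (-(m : ℚ)) k * poch ((n : ℚ) + 1) k * poch ((m : ℚ) + 2) k) /
        (poch 2 k * poch ((N : ℚ) + 1) k * (k.factorial : ℚ))

lemma poch_succ (a : ℚ) (k : ℕ) : poch a (k+1) = poch a k * (a + k) := by
  simp [poch, ascPochhammer_succ_eval]

lemma poch_succ_left (a : ℚ) (k : ℕ) : poch a (k+1) = a * poch (a+1) k := by
  induction k with
  | zero => simp [poch]
  | succ k ih => rw [poch_succ, ih, poch_succ]; push_cast; ring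

lemma poch_two (k : ℕ) : poch 2 k = (k+1).factorial := by
  induction k with
  | zero => simp [poch]
  | succ k ih => rw [poch_succ, ih]; push_cast [Nat.factorial_succ]; ring

lemma poch_pos (a : ℚ) (k : ℕ) (h : 0 < a) : 0 < poch a k :=
  ascPochhammer_pos k a h

lemma sum_poch (k N : ℕ) :
    ∑ n ∈ Finset.range N, poch ((n:ℚ)+1) k = (N:ℚ) * poch ((N:ℚ)+1) k / (k+1) := by
  induction N with
  | zero => simp
  | succ N ih =>
      rw [Finset.sum_range_succ, ih]
      have h1 : poch ((N:ℚ)+1) k * ((N:ℚ)+1+k) = poch ((N:ℚ)+1) (k+1) := (poch_succ _ _).symm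
      have h2 : poch ((N:ℚ)+1) (k+1) = ((N:ℚ)+1) * poch ((N:ℚ)+1+1) k := poch_succ_left _ _
      have hk : ((k:ℚ)+1) ≠ 0 := by positivity
      field_simp
      push_cast
      linear_combination h1 + h2

noncomputable def Tt (m j : ℕ) : ℚ :=
  poch (-(m:ℚ)) j * poch ((m:ℚ)+2) j / ((j+1).factorial : ℚ)^2

lemma telescope (m : ℕ) : ∀ i : ℕ, ∑ j ∈ Finset.range (i+1), Tt m j
    = (1 + ((((m:ℚ)+1)^2 - ((i:ℚ)+1)^2)) * Tt m i) / ((m:ℚ)+1)^2 := by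
  intro i
  induction i with
  | zero =>
      have hm : ((m:ℚ)+1) ≠ 0 := by positivity
      simp [Tt, poch]
      field_simp
  | succ i ih =>
      rw [Finset.sum_range_succ, ih]
      have hf1 : (((i+1).factorial : ℚ)) ≠ 0 := by exact_mod_cast (i+1).factorial_ne_zero
      have hf2 : (((i+1+1).factorial : ℚ)) ≠ 0 := by exact_mod_cast (i+1+1).factorial_ne_zero
      have hrat : Tt m (i+1) * ((i:ℚ)+2)^2 = Tt m i * (((i:ℚ)+1)^2 - ((m:ℚ)+1)^2) := by
        unfold Tt
        rw [poch_succ, poch_succ]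
        push_cast [Nat.factorial_succ]
        field_simp
        ring
      have hi2 : ((i:ℚ)+2) ≠ 0 := by positivity
      have hT : Tt m (i+1) = Tt m i * (((i:ℚ)+1)^2 - ((m:ℚ)+1)^2) / ((i:ℚ)+2)^2 := by
        rw [← hrat]; field_simp
      rw [hT]
      push_cast
      field_simp
      ring

lemma sumT (m : ℕ) : ∑ j ∈ Finset.range (m+1), Tt m j = 1/((m:ℚ)+1)^2 := by
  rw [telescope m m]; ring

theorem shmaliy_sum_eq_one (N m : ℕ) (hN : 1 ≤ N) (hm : m ≤ N - 1) :
    ∑ n ∈ Finset.range N, shmaliy m n N = 1 := by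
  have hN0 : (N:ℚ) ≠ 0 := Nat.cast_ne_zero.mpr (by omega)
  have hm1 : ((m:ℚ)+1) ≠ 0 := by positivity
  calc ∑ n ∈ Finset.range N, shmaliy m n N
      = ∑ k ∈ Finset.range (m+1), (((m:ℚ)+1)^2) * Tt m k := by
        simp only [shmaliy]
        rw [← Finset.mul_sum, Finset.sum_comm, Finset.mul_sum]
        refine Finset.sum_congr rfl fun k _ => ?_
        have hP : poch ((N:ℚ)+1) k ≠ 0 := ne_of_gt (poch_pos _ _ (by positivity))
        have hfk : ((k.factorial : ℚ)) ≠ 0 := by exact_mod_cast k.factorial_ne_zero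
        have hfk1 : (((k+1).factorial : ℚ)) ≠ 0 := by exact_mod_cast (k+1).factorial_ne_zero
        have hk1 : ((k:ℚ)+1) ≠ 0 := by positivity
        have hsum : ∑ n ∈ Finset.range N,
            (poch (-(m:ℚ)) k * poch ((n:ℚ)+1) k * poch ((m:ℚ)+2) k) /
              (poch 2 k * poch ((N:ℚ)+1) k * (k.factorial : ℚ))
            = (∑ n ∈ Finset.range N, poch ((n:ℚ)+1) k) *
              (poch (-(m:ℚ)) k * poch ((m:ℚ)+2) k /
                (poch 2 k * poch ((N:ℚ)+1) k * (k.factorial : ℚ))) := by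
          rw [Finset.sum_mul]
          exact Finset.sum_congr rfl fun n _ => by ring
        rw [hsum, sum_poch, poch_two]
        unfold Tt
        push_cast [Nat.factorial_succ]
        field_simp
    _ = 1 := by
        rw [← Finset.mul_sum, sumT]
        field_simp
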